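/- Let b be a connected transient graph over X satisfying the ellipticity condition with constant E > 0, and let G = G(o,·) be its Green's function. Define w_G(x) = 1_o(x) + G(x)^{-1} ∑_{y~x} b(x,y)(G(x)^{1/2} - G(y)^{1/2})². Then for all x ∈ X: w_G(x) ≤ 1_o(x) + G(x)^{-2} ∑_y b(x,y)(G(x)-G(y))², and w_G(x) ≥ 1_o(x) + (1+E^{-1/2})^{-2} G(x)^{-2} ∑_y b(x,y)(G(x)-G(y))². -/

import Mathlib

/-- Pointwise upper and lower bounds for the supersolution Hardy weight
`w_G x = 1_o x + (G x)⁻¹ * ∑_y b x y (√(G x) - √(G y))²` in terms of the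
squared discrete derivative of the Green's function. -/
theorem stmt_4 {X : Type*} [Countable X] [DecidableEq X] (b : X → X → ℝ)
    (hb_nonneg : ∀ x y, 0 ≤ b x y)
    (hb_symm : ∀ x y, b x y = b y x)
    (hb_diag : ∀ x, b x x = 0)
    (hconn : ∀ x y : X, x ≠ y → ∃ (n : ℕ) (c : Fin (n + 1) → X),
      c 0 = x ∧ c (Fin.last n) = y ∧ ∀ i : Fin n, 0 < b (c i.castSucc) (c i.succ))
    (E : ℝ) (hE : 0 < E)
    (hdeg : ∀ x, Summable (fun z => b x z))
    (hell : ∀ x y, 0 < b x y → E * ∑' z, b x z ≤ b x y)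
    (o : X) (G : X → ℝ)
    (hGpos : ∀ x, 0 < G x)
    (hGsum : ∀ x, Summable (fun z => b x z * G z))
    (hL : ∀ x, (∑' z, b x z * (G x - G z)) = if x = o then 1 else 0)
    (hsq : ∀ x, Summable (fun y => b x y * (G x - G y) ^ 2)) :
    ∀ x : X,
      ((if x = o then (1:ℝ) else 0) +
          (G x)⁻¹ * ∑' y, b x y * (Real.sqrt (G x) - Real.sqrt (G y)) ^ 2
        ≤ (if x = o then (1:ℝ) else 0) + ((G x) ^ 2)⁻¹ * ∑' y, b x y * (G x - G y) ^ 2) ∧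
      ((if x = o then (1:ℝ) else 0) +
          ((1 + E ^ (-(1:ℝ)/2)) ^ 2)⁻¹ * ((G x) ^ 2)⁻¹ * ∑' y, b x y * (G x - G y) ^ 2
        ≤ (if x = o then (1:ℝ) else 0) +
          (G x)⁻¹ * ∑' y, b x y * (Real.sqrt (G x) - Real.sqrt (G y)) ^ 2) := by
  intro x
  have hGx := hGpos x
  set t : ℝ := E ^ (-(1:ℝ)/2) with htdef
  have hsE : (0:ℝ) < Real.sqrt E := Real.sqrt_pos.mpr hE
  have ht : t = (Real.sqrt E)⁻¹ := by
    rw [htdef, Real.sqrt_eq_rpow, ← Real.rpow_neg hE.le]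
    norm_num
  have ht0 : 0 < t := by rw [ht]; positivity
  -- abbreviations
  set s : X → ℝ := fun y => b x y * (Real.sqrt (G x) - Real.sqrt (G y)) ^ 2 with hsdef
  have ex : Real.sqrt (G x) ^ 2 = G x := Real.sq_sqrt hGx.le
  have hs_nonneg : ∀ y, 0 ≤ s y := fun y =>
    mul_nonneg (hb_nonneg x y) (sq_nonneg _)
  -- upper termwise estimate
  have hupper : ∀ y, G x * s y ≤ b x y * (G x - G y) ^ 2 := by
    intro y
    have ey : Real.sqrt (G y) ^ 2 = G y := Real.sq_sqrt (hGpos y).le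
    have e : G x - G y =
        (Real.sqrt (G x) - Real.sqrt (G y)) * (Real.sqrt (G x) + Real.sqrt (G y)) := by
      nlinarith [ex, ey, sq_nonneg (Real.sqrt (G x) - Real.sqrt (G y))]
    have hGxle : G x ≤ (Real.sqrt (G x) + Real.sqrt (G y)) ^ 2 := by
      nlinarith [Real.sqrt_nonneg (G x), Real.sqrt_nonneg (G y), ex, ey]
    calc G x * s y
        = b x y * ((Real.sqrt (G x) - Real.sqrt (G y)) ^ 2 * G x) := by
          rw [hsdef]; ring
      _ ≤ b x y * ((Real.sqrt (G x) - Real.sqrt (G y)) ^ 2 *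
            (Real.sqrt (G x) + Real.sqrt (G y)) ^ 2) :=
          mul_le_mul_of_nonneg_left
            (mul_le_mul_of_nonneg_left hGxle (sq_nonneg _)) (hb_nonneg x y)
      _ = b x y * (G x - G y) ^ 2 := by rw [e]; ring
  -- the key elliptic estimate: E * G y ≤ G x for neighbors y
  have hBG : ∑' z, b x z * G z ≤ (∑' z, b x z) * G x := by
    have hsub : ∑' z, b x z * (G x - G z)
        = (∑' z, b x z) * G x - ∑' z, b x z * G z := by
      rw [← tsum_mul_right, ← Summable.tsum_sub ((hdeg x).mul_right (G x)) (hGsum x)]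
      exact tsum_congr fun z => by ring
    have h0 : 0 ≤ ∑' z, b x z * (G x - G z) := by
      rw [hL x]; split <;> norm_num
    linarith [hsub ▸ h0]
  have hGle : ∀ y, 0 < b x y → E * G y ≤ G x := by
    intro y hby
    have h1 : b x y * G y ≤ ∑' z, b x z * G z :=
      Summable.le_tsum (hGsum x) y fun j _ => mul_nonneg (hb_nonneg x j) (hGpos j).le
    have h2 : E * ∑' z, b x z ≤ b x y := hell x y hby
    have h3 : (E * ∑' z, b x z) * G x ≤ b x y * G x :=
      mul_le_mul_of_nonneg_right h2 hGx.le
    have h8 : b x y * (E * G y) ≤ b x y * G x := by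
      nlinarith [mul_le_mul_of_nonneg_left h1 hE.le,
        mul_le_mul_of_nonneg_left hBG hE.le]
    exact le_of_mul_le_mul_left h8 hby
  -- lower termwise estimate
  have hlower : ∀ y, b x y * (G x - G y) ^ 2 ≤ (1 + t) ^ 2 * G x * s y := by
    intro y
    rcases (hb_nonneg x y).eq_or_lt with hb0 | hby
    · rw [hsdef]; simp [← hb0]
    · have ey : Real.sqrt (G y) ^ 2 = G y := Real.sq_sqrt (hGpos y).le
      have e : G x - G y =
          (Real.sqrt (G x) - Real.sqrt (G y)) * (Real.sqrt (G x) + Real.sqrt (G y)) := by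
        nlinarith [ex, ey, sq_nonneg (Real.sqrt (G x) - Real.sqrt (G y))]
      have hsy : Real.sqrt (G y) ≤ Real.sqrt (G x) * t := by
        have h1 : Real.sqrt (E * G y) ≤ Real.sqrt (G x) :=
          Real.sqrt_le_sqrt (hGle y hby)
        rw [Real.sqrt_mul hE.le] at h1
        rw [ht]
        have h2 := mul_le_mul_of_nonneg_left h1 (inv_nonneg.mpr hsE.le)
        calc Real.sqrt (G y) = (Real.sqrt E)⁻¹ * (Real.sqrt E * Real.sqrt (G y)) := by
              field_simp
          _ ≤ (Real.sqrt E)⁻¹ * Real.sqrt (G x) := h2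
          _ = Real.sqrt (G x) * (Real.sqrt E)⁻¹ := by ring
      have hp2 : (Real.sqrt (G x) + Real.sqrt (G y)) ^ 2 ≤ (1 + t) ^ 2 * G x := by
        have hle : Real.sqrt (G x) + Real.sqrt (G y) ≤ Real.sqrt (G x) * (1 + t) := by
          nlinarith [hsy]
        nlinarith [Real.sqrt_nonneg (G x), Real.sqrt_nonneg (G y), ex, hle, ht0]
      calc b x y * (G x - G y) ^ 2
          = b x y * ((Real.sqrt (G x) - Real.sqrt (G y)) ^ 2 *
              (Real.sqrt (G x) + Real.sqrt (G y)) ^ 2) := by rw [e]; ring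
        _ ≤ b x y * ((Real.sqrt (G x) - Real.sqrt (G y)) ^ 2 * ((1 + t) ^ 2 * G x)) :=
            mul_le_mul_of_nonneg_left
              (mul_le_mul_of_nonneg_left hp2 (sq_nonneg _)) (hb_nonneg x y)
        _ = (1 + t) ^ 2 * G x * s y := by rw [hsdef]; ring
  -- summability of s
  have hs_sum : Summable s := by
    refine Summable.of_nonneg_of_le hs_nonneg (fun y => ?_) (((hsq x)).mul_left (G x)⁻¹)
    rw [le_inv_mul_iff₀ hGx]
    exact hupper y
  -- tsum inequalities
  have hS1 : G x * ∑' y, s y ≤ ∑' y, b x y * (G x - G y) ^ 2 := by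
    rw [← tsum_mul_left]
    exact Summable.tsum_le_tsum hupper (hs_sum.mul_left _) (hsq x)
  have hS2 : ∑' y, b x y * (G x - G y) ^ 2 ≤ (1 + t) ^ 2 * G x * ∑' y, s y := by
    rw [← tsum_mul_left]
    exact Summable.tsum_le_tsum hlower (hsq x) (hs_sum.mul_left _)
  have h1t : (0:ℝ) < 1 + t := by linarith
  constructor
  · apply add_le_add_right
    have e1 : (G x)⁻¹ * ∑' y, s y = (G x ^ 2)⁻¹ * (G x * ∑' y, s y) := by
      field_simp
    rw [e1]
    exact mul_le_mul_of_nonneg_left hS1 (by positivity)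
  · apply add_le_add_right
    have e2 : (G x)⁻¹ * ∑' y, s y
        = ((1 + t) ^ 2)⁻¹ * (G x ^ 2)⁻¹ * ((1 + t) ^ 2 * G x * ∑' y, s y) := by
      field_simp
    rw [e2]
    exact mul_le_mul_of_nonneg_left hS2 (by positivity)
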